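/- Every metric space X of countable asymptotic dimension is large scale paracompact: for every ε > 0 and every set S of cardinality bigger than card(X × ℕ) there exists an (ε,ε)-Lipschitz partition of unity g : X → Δ(S) that is cobounded and whose Lebesgue number is at least 1/ε. -/

import Mathlib

universe u

/-- The `l¹` distance between two (finitely supported) functions `S → ℝ`,
modeling the metric of `Δ(S) ⊆ l¹(S)`. -/
noncomputable def l1dist {S : Type*} (φ ψ : S → ℝ) : ℝ := ∑ᶠ v, |φ v - ψ v|

/-- `φ` is a point of `Δ(S)`. -/
def IsDelta {S : Type*} (φ : S → ℝ) : Prop :=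
  (∀ v, 0 ≤ φ v) ∧ (Function.support φ).Finite ∧ ∑ᶠ v, φ v = 1

/-- `f` is a partition of unity on `A` with values in `Δ(S)`. -/
def PartUnityOn {X S : Type*} (f : X → S → ℝ) (A : Set X) : Prop :=
  ∀ a ∈ A, IsDelta (f a)

/-- `f` is `(ε,ε)`-Lipschitz on `A` (with respect to the `l¹` metric on `Δ(S)`). -/
def LipschitzEpsOn {X S : Type*} [MetricSpace X] (ε : ℝ) (f : X → S → ℝ) (A : Set X) : Prop :=
  ∀ x ∈ A, ∀ y ∈ A, l1dist (f x) (f y) ≤ ε * dist x y + ε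

/-- `f` is `K`-cobounded on `A`. -/
def CoboundedOn {X S : Type*} [MetricSpace X] (K : ℝ) (f : X → S → ℝ) (A : Set X) : Prop :=
  ∀ v : S, EMetric.diam {x ∈ A | 0 < f x v} ≤ ENNReal.ofReal K

/-- A family of subsets is `R`-disjoint if distinct members are at distance `> R`. -/
def RDisjointFam {X : Type*} [MetricSpace X] (R : ℝ) (𝒲 : Set (Set X)) : Prop :=
  ∀ U ∈ 𝒲, ∀ V ∈ 𝒲, U ≠ V → ∀ x ∈ U, ∀ y ∈ V, R < dist x y

/-- `𝒰` is uniformly bounded. -/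
def UnifBounded {X : Type*} [MetricSpace X] (𝒰 : Set (Set X)) : Prop :=
  ∃ M : ℝ, 0 < M ∧ ∀ U ∈ 𝒰, EMetric.diam U ≤ ENNReal.ofReal M

/-- `U` can be expressed as a union of at most `k` families from `𝒱` that are
`R`-disjoint. -/
def UnionOfFams {X : Type*} [MetricSpace X] (k : ℕ) (R : ℝ) (𝒱 : Set (Set X))
    (U : Set X) : Prop :=
  ∃ 𝒲 : Fin k → Set (Set X), (∀ j, 𝒲 j ⊆ 𝒱 ∧ RDisjointFam R (𝒲 j)) ∧
    U = ⋃ j, ⋃₀ 𝒲 j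

/-- `X` is of countable asymptotic dimension (Definition 7.1). -/
def CountableAsdim (X : Type*) [MetricSpace X] : Prop :=
  ∃ nseq : ℕ → ℕ, (∀ i, 1 ≤ nseq i) ∧
    ∀ R : ℕ → ℝ, (∀ i, 0 < R i) →
      ∃ 𝒱 : ℕ → Set (Set X), 𝒱 1 = {Set.univ} ∧
        (∀ i, 1 ≤ i → ∀ U ∈ 𝒱 i, UnionOfFams (nseq i) (R i) (𝒱 (i + 1)) U) ∧
        ∃ m, 1 ≤ m ∧ UnifBounded (𝒱 m)



namespace St16
open Finset
open scoped Classical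

variable {α β : Type*}

/-- total mass of a finitely supported function -/
noncomputable def tot (φ : α →₀ ℝ) : ℝ := ∑ v ∈ φ.support, φ v

/-- l¹ distance at the `Finsupp` level -/
noncomputable def l1f (φ ψ : α →₀ ℝ) : ℝ := ∑ v ∈ φ.support ∪ ψ.support, |φ v - ψ v|

lemma tot_eq_sum {φ : α →₀ ℝ} {s : Finset α} (h : φ.support ⊆ s) :
    tot φ = ∑ v ∈ s, φ v :=
  Finset.sum_subset h (fun v _ hv => Finsupp.notMem_support_iff.1 hv)

lemma l1f_eq_sum {φ ψ : α →₀ ℝ} {s : Finset α} (hφ : φ.support ⊆ s)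
    (hψ : ψ.support ⊆ s) : l1f φ ψ = ∑ v ∈ s, |φ v - ψ v| := by
  refine Finset.sum_subset (Finset.union_subset hφ hψ) ?_
  intro v _ hv
  simp only [Finset.mem_union, not_or, Finsupp.mem_support_iff, not_not] at hv
  simp [hv.1, hv.2]

lemma finsum_eq_tot (φ : α →₀ ℝ) : ∑ᶠ v, φ v = tot φ :=
  finsum_eq_sum_of_support_subset _ (by rw [Finsupp.fun_support_eq])

lemma l1dist_eq_l1f (φ ψ : α →₀ ℝ) : l1dist ⇑φ ⇑ψ = l1f φ ψ := by
  refine finsum_eq_sum_of_support_subset _ ?_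
  intro v hv
  simp only [Function.mem_support, ne_eq] at hv
  simp only [Finset.coe_union, Set.mem_union, Finset.mem_coe, Finsupp.mem_support_iff]
  by_contra hc
  push_neg at hc
  simp [hc.1, hc.2] at hv

lemma l1f_self (φ : α →₀ ℝ) : l1f φ φ = 0 := by simp [l1f]

lemma l1f_comm (φ ψ : α →₀ ℝ) : l1f φ ψ = l1f ψ φ := by
  rw [l1f, Finset.union_comm]
  exact Finset.sum_congr rfl (fun v _ => abs_sub_comm _ _)

lemma l1f_nonneg (φ ψ : α →₀ ℝ) : 0 ≤ l1f φ ψ :=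
  Finset.sum_nonneg fun v _ => abs_nonneg _

lemma l1f_le_tot_add_tot {φ ψ : α →₀ ℝ} (hφ : ∀ v, 0 ≤ φ v) (hψ : ∀ v, 0 ≤ ψ v) :
    l1f φ ψ ≤ tot φ + tot ψ := by
  have h1 : tot φ = ∑ v ∈ φ.support ∪ ψ.support, φ v := tot_eq_sum Finset.subset_union_left
  have h2 : tot ψ = ∑ v ∈ φ.support ∪ ψ.support, ψ v := tot_eq_sum Finset.subset_union_right
  rw [h1, h2, ← Finset.sum_add_distrib]
  refine Finset.sum_le_sum fun v _ => ?_
  have := hφ v; have := hψ v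
  rw [abs_le]; constructor <;> linarith

lemma tot_embDomain (f : α ↪ β) (φ : α →₀ ℝ) : tot (φ.embDomain f) = tot φ := by
  rw [tot, Finsupp.support_embDomain, Finset.sum_map]
  exact Finset.sum_congr rfl fun v _ => Finsupp.embDomain_apply_self _ _ _

lemma l1f_embDomain (f : α ↪ β) (φ ψ : α →₀ ℝ) :
    l1f (φ.embDomain f) (ψ.embDomain f) = l1f φ ψ := by
  rw [l1f, Finsupp.support_embDomain, Finsupp.support_embDomain, ← Finset.map_union,
    Finset.sum_map]
  exact Finset.sum_congr rfl fun v _ => by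
    rw [Finsupp.embDomain_apply_self, Finsupp.embDomain_apply_self]

lemma tot_smul (c : ℝ) (φ : α →₀ ℝ) : tot (c • φ) = c * tot φ := by
  rw [tot_eq_sum (Finsupp.support_smul (b := c) (g := φ)), tot, Finset.mul_sum]
  exact Finset.sum_congr rfl fun v _ => rfl

lemma tot_finset_sum {ι : Type*} (s : Finset ι) (φ : ι → α →₀ ℝ) :
    tot (∑ j ∈ s, φ j) = ∑ j ∈ s, tot (φ j) := by
  rw [tot_eq_sum (Finsupp.support_finset_sum (s := s) (f := φ))]
  have h1 : ∀ v ∈ s.biUnion fun i => (φ i).support, (∑ j ∈ s, φ j) v = ∑ j ∈ s, φ j v :=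
    fun v _ => Finsupp.finset_sum_apply s φ v
  rw [Finset.sum_congr rfl h1, Finset.sum_comm]
  exact Finset.sum_congr rfl fun j hj =>
    (tot_eq_sum (fun v hv => Finset.mem_biUnion.2 ⟨j, hj, hv⟩)).symm

lemma tot_single_one (a : α) : tot (Finsupp.single a (1:ℝ)) = 1 := by
  rw [tot, Finsupp.support_single_ne_zero a one_ne_zero]
  simp

end St16
open scoped Classical
section
variable {X : Type u} [MetricSpace X]

/-- closed `δ`-neighborhood (with witness) -/
def Nbhd (A : Set X) (δ : ℝ) : Set X := {x | ∃ a ∈ A, dist x a ≤ δ}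

lemma mem_nbhd_self {A : Set X} {δ : ℝ} (hδ : 0 ≤ δ) {x : X} (hx : x ∈ A) :
    x ∈ Nbhd A δ := ⟨x, hx, by simpa [dist_self] using hδ⟩

lemma nbhd_mono {A : Set X} {δ δ' : ℝ} (h : δ ≤ δ') : Nbhd A δ ⊆ Nbhd A δ' :=
  fun _ ⟨a, ha, hd⟩ => ⟨a, ha, hd.trans h⟩

/-- The inductive invariant: a `lam`-Lipschitz cobounded partition of unity on the
`δ`-neighborhood of `A`, with vertices above `A` and Lebesgue number `L`. -/
def Good (δ lam L K : ℝ) (A : Set X) : Prop :=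
  ∃ g : X → (X × ℕ) →₀ ℝ,
    (∀ x ∈ Nbhd A δ, (∀ v, 0 ≤ g x v) ∧ St16.tot (g x) = 1) ∧
    (∀ x ∈ Nbhd A δ, ∀ v, g x v ≠ 0 → v.1 ∈ A) ∧
    (∀ x ∈ Nbhd A δ, ∀ y ∈ Nbhd A δ, St16.l1f (g x) (g y) ≤ lam * dist x y + lam) ∧
    (∀ v, EMetric.diam {x | x ∈ Nbhd A δ ∧ 0 < g x v} ≤ ENNReal.ofReal K) ∧
    (∀ x ∈ A, ∃ v, ∀ y ∈ Nbhd A δ, dist x y < L → 0 < g y v)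

lemma good_mono {δ lam lam' L L' K K' : ℝ} {A : Set X}
    (h : Good δ lam L K A) (hlam : lam ≤ lam') (hL : L' ≤ L) (hK : K ≤ K') :
    Good δ lam' L' K' A := by
  obtain ⟨g, h1, h2, h3, h4, h5⟩ := h
  refine ⟨g, h1, h2, fun x hx y hy => ?_, fun v => (h4 v).trans ?_, fun x hx => ?_⟩
  · have := h3 x hx y hy
    have hd : 0 ≤ dist x y := dist_nonneg
    nlinarith
  · exact ENNReal.ofReal_le_ofReal hK
  · obtain ⟨v, hv⟩ := h5 x hx
    exact ⟨v, fun y hy hd => hv y hy (lt_of_lt_of_le hd hL)⟩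

lemma good_base {A : Set X} {M δ lam L : ℝ} (hδ : 0 ≤ δ) (hlam : 0 ≤ lam) (hM : 0 ≤ M)
    (hbd : EMetric.diam A ≤ ENNReal.ofReal M) : Good δ lam L (M + 2 * δ) A := by
  rcases A.eq_empty_or_nonempty with rfl | ⟨p, hp⟩
  · have hN : Nbhd (∅ : Set X) δ = ∅ := by
      ext x; simp [Nbhd]
    refine ⟨fun _ => 0, by simp [hN], by simp [hN], by simp [hN], fun v => ?_, by simp⟩
    have he : {x | x ∈ Nbhd (∅ : Set X) δ ∧ 0 < (0 : (X × ℕ) →₀ ℝ) v} = ∅ := by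
      ext x; simp [hN]
    rw [he]
    simp [EMetric.diam]
  · refine ⟨fun _ => Finsupp.single (p, 0) 1, fun x _ => ⟨?_, St16.tot_single_one _⟩,
      ?_, ?_, ?_, ?_⟩
    · intro v
      rw [Finsupp.single_apply]
      split <;> norm_num
    · intro x _ v hv
      rw [Finsupp.single_apply] at hv
      split at hv
      · next h => rw [← h]; exact hp
      · simp at hv
    · intro x _ y _
      rw [St16.l1f_self]
      have : 0 ≤ dist x y := dist_nonneg
      nlinarith
    · intro v
      refine le_trans (EMetric.diam_mono (fun x hx => hx.1)) (EMetric.diam_le ?_)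
      rintro x ⟨a, ha, hxa⟩ y ⟨b, hb, hyb⟩
      have h1 : edist x a ≤ ENNReal.ofReal δ := by
        rw [edist_dist]; exact ENNReal.ofReal_le_ofReal hxa
      have h2 : edist y b ≤ ENNReal.ofReal δ := by
        rw [edist_dist]; exact ENNReal.ofReal_le_ofReal hyb
      have h3 : edist a b ≤ ENNReal.ofReal M := le_trans (EMetric.edist_le_diam_of_mem ha hb) hbd
      calc edist x y ≤ edist x a + edist a b + edist b y := edist_triangle4 x a b y
        _ ≤ ENNReal.ofReal δ + ENNReal.ofReal M + ENNReal.ofReal δ := by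
            gcongr
            rwa [edist_comm]
        _ = ENNReal.ofReal (M + 2 * δ) := by
            rw [← ENNReal.ofReal_add hδ hM, ← ENNReal.ofReal_add (by linarith) hδ]
            ring_nf
    · intro x _
      exact ⟨(p, 0), fun y _ _ => by simp⟩

end
section
open scoped Classical
variable {X : Type u} [MetricSpace X]

/-- `R`-disjoint (copied signature) -/
lemma good_sUnion (𝒲 : Set (Set X)) (R δ lam L K : ℝ) (hδ : 0 ≤ δ) (hR : 2 * δ < R)
    (hlam : 0 ≤ lam)
    (hdisj : ∀ U ∈ 𝒲, ∀ V ∈ 𝒲, U ≠ V → ∀ x ∈ U, ∀ y ∈ V, R < dist x y)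
    (h : ∀ U ∈ 𝒲, Good δ lam L K U) :
    Good δ (max lam (2 / (R - 2 * δ))) (min L (R - 2 * δ)) K (⋃₀ 𝒲) := by
  have hRpos : 0 < R - 2 * δ := by linarith
  have hmax0 : 0 ≤ max lam (2 / (R - 2 * δ)) := le_trans hlam (le_max_left _ _)
  choose! G hG1 hG2 hG3 hG4 hG5 using h
  -- uniqueness of the neighborhood a point can lie in
  have huniq : ∀ U ∈ 𝒲, ∀ V ∈ 𝒲, ∀ x : X, x ∈ Nbhd U δ → x ∈ Nbhd V δ → U = V := by
    intro U hU V hV x ⟨u, hu, hxu⟩ ⟨w, hw, hxw⟩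
    by_contra hne
    have := hdisj U hU V hV hne u hu w hw
    have : dist u w ≤ 2 * δ := by
      calc dist u w ≤ dist u x + dist x w := dist_triangle u x w
        _ ≤ δ + δ := by rw [dist_comm u x]; exact add_le_add hxu hxw
        _ = 2 * δ := by ring
    linarith
  have hmem : ∀ x : X, x ∈ Nbhd (⋃₀ 𝒲) δ ↔ ∃ U ∈ 𝒲, x ∈ Nbhd U δ := by
    intro x
    constructor
    · rintro ⟨a, ⟨U, hU, haU⟩, hd⟩; exact ⟨U, hU, a, haU, hd⟩
    · rintro ⟨U, hU, a, haU, hd⟩; exact ⟨a, ⟨U, hU, haU⟩, hd⟩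
  set g : X → (X × ℕ) →₀ ℝ :=
    fun x => if hx : ∃ U ∈ 𝒲, x ∈ Nbhd U δ then G hx.choose x else 0 with hgdef
  have hgx : ∀ U ∈ 𝒲, ∀ x ∈ Nbhd U δ, g x = G U x := by
    intro U hU x hx
    have hex : ∃ U ∈ 𝒲, x ∈ Nbhd U δ := ⟨U, hU, hx⟩
    rw [hgdef]
    simp only [dif_pos hex]
    have h1 : hex.choose ∈ 𝒲 := hex.choose_spec.1
    have h2 : x ∈ Nbhd hex.choose δ := hex.choose_spec.2
    rw [huniq _ h1 _ hU x h2 hx]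
  refine ⟨g, ?_, ?_, ?_, ?_, ?_⟩
  · intro x hx
    obtain ⟨U, hU, hxU⟩ := (hmem x).1 hx
    rw [hgx U hU x hxU]
    exact hG1 U hU x hxU
  · intro x hx v hv
    obtain ⟨U, hU, hxU⟩ := (hmem x).1 hx
    rw [hgx U hU x hxU] at hv
    exact ⟨U, hU, hG2 U hU x hxU v hv⟩
  · intro x hx y hy
    obtain ⟨U, hU, hxU⟩ := (hmem x).1 hx
    obtain ⟨V, hV, hyV⟩ := (hmem y).1 hy
    rw [hgx U hU x hxU, hgx V hV y hyV]
    by_cases hUV : U = V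
    · subst hUV
      have := hG3 U hU x hxU y hyV
      have hd : 0 ≤ dist x y := dist_nonneg
      have hle : lam ≤ max lam (2 / (R - 2 * δ)) := le_max_left _ _
      nlinarith
    · have hnn1 := hG1 U hU x hxU
      have hnn2 := hG1 V hV y hyV
      obtain ⟨u, hu, hxu⟩ := hxU
      obtain ⟨w, hw, hyw⟩ := hyV
      have h1 : R < dist u w := hdisj U hU V hV hUV u hu w hw
      have h2 : dist u w ≤ δ + dist x y + δ := by
        calc dist u w ≤ dist u x + dist x y + dist y w := dist_triangle4 u x y w
          _ ≤ δ + dist x y + δ := by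
              rw [dist_comm u x]
              exact add_le_add (add_le_add hxu le_rfl) hyw
      have hdist : R - 2 * δ < dist x y := by linarith
      have hb : St16.l1f (G U x) (G V y) ≤ 2 := by
        have := St16.l1f_le_tot_add_tot hnn1.1 hnn2.1
        rw [hnn1.2, hnn2.2] at this
        linarith
      have hkey : 2 ≤ 2 / (R - 2 * δ) * dist x y := by
        rw [div_mul_eq_mul_div, le_div_iff₀ hRpos]
        nlinarith
      have h3 : 2 / (R - 2 * δ) * dist x y ≤ max lam (2 / (R - 2 * δ)) * dist x y :=
        mul_le_mul_of_nonneg_right (le_max_right _ _) dist_nonneg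
      linarith
  · intro v
    by_cases hv : ∃ U ∈ 𝒲, v.1 ∈ U
    · obtain ⟨U₀, hU₀, hvU₀⟩ := hv
      refine le_trans (EMetric.diam_mono ?_) (hG4 U₀ hU₀ v)
      rintro x ⟨hx, hgv⟩
      obtain ⟨U, hU, hxU⟩ := (hmem x).1 hx
      rw [hgx U hU x hxU] at hgv
      have hv1 : v.1 ∈ U := hG2 U hU x hxU v (ne_of_gt hgv)
      have hUU : U = U₀ := by
        by_contra hne
        have := hdisj U hU U₀ hU₀ hne v.1 hv1 v.1 hvU₀
        simp [dist_self] at this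
        linarith
      subst hUU
      exact ⟨hxU, hgv⟩
    · push_neg at hv
      have he : {x | x ∈ Nbhd (⋃₀ 𝒲) δ ∧ 0 < g x v} = ∅ := by
        ext x
        simp only [Set.mem_setOf_eq, Set.mem_empty_iff_false, iff_false, not_and]
        intro hx hgv
        obtain ⟨U, hU, hxU⟩ := (hmem x).1 hx
        rw [hgx U hU x hxU] at hgv
        exact hv U hU (hG2 U hU x hxU v (ne_of_gt hgv))
      rw [he]
      simp [EMetric.diam]
  · rintro x ⟨U, hU, hxU⟩
    obtain ⟨v, hv⟩ := hG5 U hU x hxU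
    refine ⟨v, fun y hy hd => ?_⟩
    obtain ⟨V, hV, hyV⟩ := (hmem y).1 hy
    have hUV : V = U := by
      by_contra hne
      obtain ⟨w, hw, hyw⟩ := hyV
      have h1 : R < dist x w := hdisj U hU V hV (Ne.symm hne) x hxU w hw
      have h2 : dist x w ≤ dist x y + δ := by
        calc dist x w ≤ dist x y + dist y w := dist_triangle x y w
          _ ≤ dist x y + δ := by linarith
      have : dist x y < R - 2 * δ := lt_of_lt_of_le hd (min_le_right _ _)
      linarith
    subst hUV
    rw [hgx V hV y hyV]
    exact hv y hyV (lt_of_lt_of_le hd (min_le_left _ _))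

end
section
open scoped Classical
variable {X : Type u} [MetricSpace X]

lemma good_glue {k : ℕ} (hk : 0 < k) (A : Fin k → Set X)
    (δ δ' r lam L K : ℝ) (hδ : 0 ≤ δ) (hr : δ < r) (hrδ' : r ≤ δ') (hlam : 0 ≤ lam)
    (h : ∀ j, Good δ' lam L K (A j)) :
    Good δ (lam + 2 * k / (r - δ)) (min L r) K (⋃ j, A j) := by
  choose G hG1 hG2 hG3 hG4 hG5 using h
  set σ := r - δ with hσdef
  have hσ : 0 < σ := by simp only [hσdef]; linarith
  set b : Fin k → X → ℝ :=
    fun j x => if (A j).Nonempty then max 0 (r - Metric.infDist x (A j)) else 0 with hb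
  set Sf : X → ℝ := fun x => ∑ j, b j x with hSf
  have hb_nonneg : ∀ j x, 0 ≤ b j x := by
    intro j x; rw [hb]; dsimp only; split
    · exact le_max_left _ _
    · exact le_refl 0
  have hb_lip : ∀ (j : Fin k) (x y : X), |b j x - b j y| ≤ dist x y := by
    intro j x y
    rw [hb]; dsimp only; split
    · rw [max_comm 0 (r - Metric.infDist x (A j)), max_comm 0 (r - Metric.infDist y (A j))]
      refine le_trans (abs_max_sub_max_le_abs _ _ _) ?_
      have h1 : Metric.infDist x (A j) ≤ Metric.infDist y (A j) + dist x y :=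
        Metric.infDist_le_infDist_add_dist
      have h2 : Metric.infDist y (A j) ≤ Metric.infDist x (A j) + dist y x :=
        Metric.infDist_le_infDist_add_dist
      rw [dist_comm y x] at h2
      rw [abs_le]
      constructor <;> [linarith; linarith]
    · simpa using dist_nonneg
  have hb_pos : ∀ (j : Fin k) (x : X), 0 < b j x → x ∈ Nbhd (A j) δ' := by
    intro j x hbx
    rw [hb] at hbx; dsimp only at hbx
    split at hbx
    · next hne =>
      have hinf : Metric.infDist x (A j) < r := by
        rcases le_or_gt r (Metric.infDist x (A j)) with hc | hc
        · exfalso; rw [max_eq_left (by linarith)] at hbx; exact lt_irrefl 0 hbx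
        · exact hc
      obtain ⟨a, ha, hda⟩ := (Metric.infDist_lt_iff hne).1 hinf
      exact ⟨a, ha, le_trans hda.le hrδ'⟩
    · exact absurd hbx (lt_irrefl 0)
  have hmem_b : ∀ (j : Fin k) (x : X), x ∈ Nbhd (A j) δ → σ ≤ b j x := by
    rintro j x ⟨a, ha, hxa⟩
    rw [hb]; dsimp only
    rw [if_pos ⟨a, ha⟩]
    have : Metric.infDist x (A j) ≤ δ := le_trans (Metric.infDist_le_dist_of_mem ha) hxa
    exact le_max_of_le_right (by simp only [hσdef]; linarith)
  have hS_ge : ∀ x ∈ Nbhd (⋃ j, A j) δ, σ ≤ Sf x := by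
    rintro x ⟨a, ha, hxa⟩
    rw [Set.mem_iUnion] at ha
    obtain ⟨j0, hj0⟩ := ha
    refine le_trans (hmem_b j0 x ⟨a, hj0, hxa⟩) ?_
    exact Finset.single_le_sum (fun j _ => hb_nonneg j x) (Finset.mem_univ j0)
  have hS_lip : ∀ x y : X, |Sf x - Sf y| ≤ (k : ℝ) * dist x y := by
    intro x y
    rw [hSf]; dsimp only
    rw [← Finset.sum_sub_distrib]
    refine le_trans (Finset.abs_sum_le_sum_abs _ _) ?_
    refine le_trans (Finset.sum_le_sum fun j _ => hb_lip j x y) ?_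
    rw [Finset.sum_const, Finset.card_univ, Fintype.card_fin, nsmul_eq_mul]
  -- embeddings with disjoint ranges
  set e : Fin k → (X × ℕ) ↪ (X × ℕ) :=
    fun j => ⟨fun v => (v.1, v.2 * k + (j : ℕ)), by
      rintro ⟨a, n⟩ ⟨a', n'⟩ hh
      simp only [Prod.mk.injEq] at hh
      refine Prod.ext hh.1 ?_
      have := hh.2
      have : n * k = n' * k := by omega
      exact Nat.eq_of_mul_eq_mul_right hk this⟩ with he
  have he_ne : ∀ j j' : Fin k, ∀ v v' : X × ℕ, e j v = e j' v' → j = j' := by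
    intro j j' v v' hh
    rw [he] at hh
    change (v.1, v.2 * k + (j : ℕ)) = (v'.1, v'.2 * k + (j' : ℕ)) at hh; rw [Prod.mk.injEq] at hh
    have h2 := hh.2
    have h2' : (j : ℕ) + v.2 * k = (j' : ℕ) + v'.2 * k := by omega
    have hmod : ((j : ℕ) + v.2 * k) % k = ((j' : ℕ) + v'.2 * k) % k := by rw [h2']
    rw [Nat.add_mul_mod_self_right, Nat.add_mul_mod_self_right,
      Nat.mod_eq_of_lt j.isLt, Nat.mod_eq_of_lt j'.isLt] at hmod
    exact Fin.ext hmod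
  set c : Fin k → X → ℝ := fun j x => b j x / Sf x with hc
  set g : X → (X × ℕ) →₀ ℝ := fun x => ∑ j, c j x • (G j x).embDomain (e j) with hg
  have hb_pos_of : ∀ (j : Fin k) (x : X), (A j).Nonempty → Metric.infDist x (A j) < r →
      0 < b j x := by
    intro j x hne hlt
    rw [hb]; dsimp only
    rw [if_pos hne]
    exact lt_max_iff.2 (Or.inr (by linarith))
  have he_fst : ∀ (j : Fin k) (w : X × ℕ), (e j w).1 = w.1 := by
    intro j w; rw [he]; rfl
  have hc_eq : ∀ (j : Fin k) (x : X), c j x = b j x / Sf x := fun j x => rfl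
  have hS_eq : ∀ x : X, Sf x = ∑ j, b j x := fun x => rfl
  have hg_eq : ∀ x : X, g x = ∑ j, c j x • (G j x).embDomain (e j) := fun x => rfl
  clear_value b Sf c g
  clear hb hSf hc hg
  have hg_apply : ∀ (x : X) (j : Fin k) (v : X × ℕ), g x (e j v) = c j x * G j x v := by
    intro x j v
    rw [hg_eq]
    rw [Finsupp.finset_sum_apply]
    rw [Finset.sum_eq_single j]
    · rw [Finsupp.smul_apply, Finsupp.embDomain_apply_self, smul_eq_mul]
    · intro j' _ hj'
      rw [Finsupp.smul_apply, Finsupp.embDomain_notin_range, smul_zero]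
      rintro ⟨w, hw⟩
      exact hj' (he_ne j' j w v hw)
    · intro hj; exact absurd (Finset.mem_univ j) hj
  have hg_out : ∀ (x : X) (v : X × ℕ), (∀ j w, v ≠ e j w) → g x v = 0 := by
    intro x v hv
    rw [hg_eq]
    rw [Finsupp.finset_sum_apply]
    refine Finset.sum_eq_zero fun j _ => ?_
    rw [Finsupp.smul_apply, Finsupp.embDomain_notin_range, smul_zero]
    rintro ⟨w, hw⟩; exact hv j w hw.symm
  have hc_nonneg : ∀ (j : Fin k) (x : X), x ∈ Nbhd (⋃ j, A j) δ → 0 ≤ c j x := by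
    intro j x hx
    rw [hc_eq]
    exact div_nonneg (hb_nonneg j x) (le_of_lt (lt_of_lt_of_le hσ (hS_ge x hx)))
  have hc_pos_mem : ∀ (j : Fin k) (x : X), x ∈ Nbhd (⋃ j, A j) δ → c j x ≠ 0 →
      (0 < b j x ∧ x ∈ Nbhd (A j) δ') := by
    intro j x hx hcx
    have hSx : 0 < Sf x := lt_of_lt_of_le hσ (hS_ge x hx)
    have hbx : b j x ≠ 0 := by
      intro h0; rw [hc_eq, h0, zero_div] at hcx; exact hcx rfl
    have hbpos : 0 < b j x := lt_of_le_of_ne (hb_nonneg j x) (Ne.symm hbx)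
    exact ⟨hbpos, hb_pos j x hbpos⟩
  refine ⟨g, ?_, ?_, ?_, ?_, ?_⟩
  · -- partition of unity
    intro x hx
    have hSx : 0 < Sf x := lt_of_lt_of_le hσ (hS_ge x hx)
    constructor
    · intro v
      by_cases hev : ∃ j w, v = e j w
      · obtain ⟨j, w, rfl⟩ := hev
        rw [hg_apply]
        by_cases hcx : c j x = 0
        · rw [hcx, zero_mul]
        · obtain ⟨hbpos, hxj⟩ := hc_pos_mem j x hx hcx
          exact mul_nonneg (hc_nonneg j x hx) ((hG1 j x hxj).1 w)
      · push_neg at hev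
        rw [hg_out x v hev]
    · rw [hg_eq, St16.tot_finset_sum]
      have hcong : ∀ j ∈ Finset.univ, St16.tot (c j x • (G j x).embDomain (e j)) = c j x := by
        intro j _
        rw [St16.tot_smul, St16.tot_embDomain]
        by_cases hcx : c j x = 0
        · rw [hcx, zero_mul]
        · rw [(hG1 j x (hc_pos_mem j x hx hcx).2).2, mul_one]
      rw [Finset.sum_congr rfl hcong]
      simp only [hc_eq]
      rw [← Finset.sum_div, ← hS_eq]
      exact div_self (ne_of_gt hSx)
  · -- supports over the union
    intro x hx v hv
    by_cases hev : ∃ j w, v = e j w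
    · obtain ⟨j, w, rfl⟩ := hev
      rw [hg_apply] at hv
      have hcx : c j x ≠ 0 := fun h0 => hv (by rw [h0, zero_mul])
      have hGw : G j x w ≠ 0 := fun h0 => hv (by rw [h0, mul_zero])
      have hw1 : w.1 ∈ A j := hG2 j x (hc_pos_mem j x hx hcx).2 w hGw
      rw [he_fst]
      exact Set.mem_iUnion.2 ⟨j, hw1⟩
    · push_neg at hev
      exact absurd (hg_out x v hev) hv
  · -- Lipschitz
    intro x hx y hy
    have hSx : 0 < Sf x := lt_of_lt_of_le hσ (hS_ge x hx)
    have hSy : 0 < Sf y := lt_of_lt_of_le hσ (hS_ge y hy)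
    set s : Finset (X × ℕ) :=
      Finset.univ.biUnion (fun j => ((G j x).support ∪ (G j y).support).map (e j)) with hs
    have hsupx : (g x).support ⊆ s := by
      rw [hg_eq]
      refine le_trans Finsupp.support_finset_sum ?_
      intro v hv
      rw [Finset.mem_biUnion] at hv
      obtain ⟨j, hj, hv⟩ := hv
      have hv2 := Finsupp.support_smul hv
      rw [Finsupp.support_embDomain, Finset.mem_map] at hv2
      obtain ⟨w, hw, rfl⟩ := hv2
      rw [hs]
      refine Finset.mem_biUnion.2 ⟨j, Finset.mem_univ j, ?_⟩
      exact Finset.mem_map_of_mem _ (Finset.mem_union_left _ hw)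
    have hsupy : (g y).support ⊆ s := by
      rw [hg_eq]
      refine le_trans Finsupp.support_finset_sum ?_
      intro v hv
      rw [Finset.mem_biUnion] at hv
      obtain ⟨j, hj, hv⟩ := hv
      have hv2 := Finsupp.support_smul hv
      rw [Finsupp.support_embDomain, Finset.mem_map] at hv2
      obtain ⟨w, hw, rfl⟩ := hv2
      rw [hs]
      refine Finset.mem_biUnion.2 ⟨j, Finset.mem_univ j, ?_⟩
      exact Finset.mem_map_of_mem _ (Finset.mem_union_right _ hw)
    rw [St16.l1f_eq_sum hsupx hsupy]
    have hdisjf : (↑(Finset.univ : Finset (Fin k)) : Set (Fin k)).PairwiseDisjoint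
        (fun j => ((G j x).support ∪ (G j y).support).map (e j)) := by
      intro j _ j' _ hjj'
      rw [Function.onFun, Finset.disjoint_left]
      rintro a ha ha'
      rw [Finset.mem_map] at ha ha'
      obtain ⟨w, _, rfl⟩ := ha
      obtain ⟨w', _, hw'⟩ := ha'
      exact hjj' (he_ne j j' w w' hw'.symm)
    rw [hs, Finset.sum_biUnion hdisjf]
    have hblock : ∀ j : Fin k,
        (∑ v ∈ ((G j x).support ∪ (G j y).support).map (e j), |g x v - g y v|)
          ≤ |c j x - c j y| + c j y * (lam * dist x y + lam) := by
      intro j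
      rw [Finset.sum_map]
      have hrw : ∀ w ∈ (G j x).support ∪ (G j y).support,
          |g x ((e j) w) - g y ((e j) w)| = |c j x * G j x w - c j y * G j y w| := by
        intro w _
        rw [hg_apply, hg_apply]
      rw [Finset.sum_congr rfl hrw]
      have habs : 0 ≤ |c j x - c j y| := abs_nonneg _
      have hrhs2 : 0 ≤ lam * dist x y + lam := by
        have := dist_nonneg (x := x) (y := y); nlinarith
      by_cases hcx : c j x = 0
      · by_cases hcy : c j y = 0
        · have hz : ∀ w ∈ (G j x).support ∪ (G j y).support,
              |c j x * G j x w - c j y * G j y w| = 0 := by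
            intro w _; rw [hcx, hcy]; simp
          rw [Finset.sum_congr rfl hz, Finset.sum_const_zero, hcx, hcy]
          simp [hrhs2]
        · -- c j x = 0, c j y > 0
          obtain ⟨hby, hyj⟩ := hc_pos_mem j y hy hcy
          have hcy_pos : 0 < c j y := lt_of_le_of_ne (hc_nonneg j y hy) (Ne.symm hcy)
          have : (∑ w ∈ (G j x).support ∪ (G j y).support, |c j x * G j x w - c j y * G j y w|)
              = c j y * St16.tot (G j y) := by
            rw [St16.tot_eq_sum (Finset.subset_union_right (s₁ := (G j x).support)), Finset.mul_sum]
            refine Finset.sum_congr rfl fun w _ => ?_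
            rw [hcx, zero_mul, zero_sub, abs_neg, abs_mul,
              abs_of_pos hcy_pos, abs_of_nonneg ((hG1 j y hyj).1 w)]
          rw [this, (hG1 j y hyj).2, mul_one, hcx, zero_sub, abs_neg, abs_of_pos hcy_pos]
          nlinarith
      · obtain ⟨hbx, hxj⟩ := hc_pos_mem j x hx hcx
        have hcx_pos : 0 < c j x := lt_of_le_of_ne (hc_nonneg j x hx) (Ne.symm hcx)
        by_cases hcy : c j y = 0
        · have : (∑ w ∈ (G j x).support ∪ (G j y).support, |c j x * G j x w - c j y * G j y w|)
              = c j x * St16.tot (G j x) := by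
            rw [St16.tot_eq_sum (Finset.subset_union_left (s₂ := (G j y).support)), Finset.mul_sum]
            refine Finset.sum_congr rfl fun w _ => ?_
            rw [hcy, zero_mul, sub_zero, abs_mul,
              abs_of_pos hcx_pos, abs_of_nonneg ((hG1 j x hxj).1 w)]
          rw [this, (hG1 j x hxj).2, mul_one, hcy, sub_zero, abs_of_pos hcx_pos]
          nlinarith
        · obtain ⟨hby, hyj⟩ := hc_pos_mem j y hy hcy
          have hcy_pos : 0 < c j y := lt_of_le_of_ne (hc_nonneg j y hy) (Ne.symm hcy)
          have hpoint : ∀ w ∈ (G j x).support ∪ (G j y).support,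
              |c j x * G j x w - c j y * G j y w|
                ≤ |c j x - c j y| * G j x w + c j y * |G j x w - G j y w| := by
            intro w _
            have hGx := (hG1 j x hxj).1 w
            have key : c j x * G j x w - c j y * G j y w
                = (c j x - c j y) * G j x w + c j y * (G j x w - G j y w) := by ring
            rw [key]
            refine le_trans (abs_add_le _ _) ?_
            rw [abs_mul, abs_mul, abs_of_nonneg hGx, abs_of_pos hcy_pos]
          refine le_trans (Finset.sum_le_sum hpoint) ?_
          rw [Finset.sum_add_distrib, ← Finset.mul_sum, ← Finset.mul_sum]
          have h1 : (∑ w ∈ (G j x).support ∪ (G j y).support, G j x w) = 1 := by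
            rw [← St16.tot_eq_sum (Finset.subset_union_left (s₂ := (G j y).support))]
            exact (hG1 j x hxj).2
          have h2 : (∑ w ∈ (G j x).support ∪ (G j y).support, |G j x w - G j y w|)
              = St16.l1f (G j x) (G j y) := by
            rw [St16.l1f_eq_sum (Finset.subset_union_left (s₂ := (G j y).support))
              (Finset.subset_union_right (s₁ := (G j x).support))]
          rw [h1, h2, mul_one]
          have h3 := hG3 j x hxj y hyj
          nlinarith
    refine le_trans (Finset.sum_le_sum fun j _ => hblock j) ?_
    rw [Finset.sum_add_distrib, ← Finset.sum_mul]
    have hsumcy : (∑ j, c j y) = 1 := by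
      simp only [hc_eq]
      rw [← Finset.sum_div, ← hS_eq]
      exact div_self (ne_of_gt hSy)
    rw [hsumcy, one_mul]
    -- weight variation bound
    have hW : (∑ j, |c j x - c j y|) ≤ 2 * (k : ℝ) * dist x y / σ := by
      have hstep : ∀ j : Fin k, |c j x - c j y|
          ≤ dist x y / Sf x + b j y * ((k : ℝ) * dist x y) / (Sf x * Sf y) := by
        intro j
        have hid : c j x - c j y
            = (b j x - b j y) / Sf x + b j y * (Sf y - Sf x) / (Sf x * Sf y) := by
          rw [hc_eq, hc_eq]
          field_simp
          ring
        rw [hid]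
        refine le_trans (abs_add_le _ _) ?_
        have e1 : |(b j x - b j y) / Sf x| ≤ dist x y / Sf x := by
          rw [abs_div, abs_of_pos hSx]
          gcongr
          exact hb_lip j x y
        have e2 : |b j y * (Sf y - Sf x) / (Sf x * Sf y)|
            ≤ b j y * ((k : ℝ) * dist x y) / (Sf x * Sf y) := by
          rw [abs_div, abs_of_pos (mul_pos hSx hSy), abs_mul, abs_of_nonneg (hb_nonneg j y)]
          gcongr <;>
            first
              | exact hb_nonneg j y
              | (rw [abs_sub_comm]; exact hS_lip x y)
        linarith
      refine le_trans (Finset.sum_le_sum fun j _ => hstep j) ?_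
      have hsumb : (∑ j, b j y) = Sf y := (hS_eq y).symm
      have hrw2 : (∑ j : Fin k, (dist x y / Sf x + b j y * ((k : ℝ) * dist x y) / (Sf x * Sf y)))
          = (k : ℝ) * (dist x y / Sf x) + Sf y * ((k : ℝ) * dist x y) / (Sf x * Sf y) := by
        rw [Finset.sum_add_distrib, Finset.sum_const, Finset.card_univ, Fintype.card_fin,
          nsmul_eq_mul, ← Finset.sum_div, ← Finset.sum_mul, hsumb]
      rw [hrw2]
      have hrw3 : (k : ℝ) * (dist x y / Sf x) + Sf y * ((k : ℝ) * dist x y) / (Sf x * Sf y)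
          = 2 * (k : ℝ) * dist x y / Sf x := by
        field_simp
        ring
      rw [hrw3]
      have h0 : 0 ≤ 2 * (k : ℝ) * dist x y :=
        mul_nonneg (mul_nonneg (by norm_num) (Nat.cast_nonneg k)) dist_nonneg
      exact div_le_div_of_nonneg_left h0 hσ (hS_ge x hx)
    have hfin : 2 * (k : ℝ) * dist x y / σ + (lam * dist x y + lam)
        ≤ (lam + 2 * (k : ℝ) / σ) * dist x y + (lam + 2 * (k : ℝ) / σ) := by
      have h2k : 0 ≤ 2 * (k : ℝ) / σ := by positivity
      have hd0 : 0 ≤ dist x y := dist_nonneg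
      have heq : 2 * (k : ℝ) * dist x y / σ = (2 * (k : ℝ) / σ) * dist x y := by ring
      nlinarith
    linarith
  · -- cobounded
    intro v
    by_cases hev : ∃ j w, v = e j w
    · obtain ⟨j, w, rfl⟩ := hev
      refine le_trans (EMetric.diam_mono ?_) (hG4 j w)
      rintro x ⟨hx, hgv⟩
      rw [hg_apply] at hgv
      have hcx : c j x ≠ 0 := fun h0 => by rw [h0, zero_mul] at hgv; exact lt_irrefl 0 hgv
      obtain ⟨hbx, hxj⟩ := hc_pos_mem j x hx hcx
      have hGw : 0 < G j x w := by
        rcases lt_or_eq_of_le ((hG1 j x hxj).1 w) with hpos | heq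
        · exact hpos
        · exfalso; rw [← heq, mul_zero] at hgv; exact lt_irrefl 0 hgv
      exact ⟨hxj, hGw⟩
    · push_neg at hev
      have hempty : {x | x ∈ Nbhd (⋃ j, A j) δ ∧ 0 < g x v} = ∅ := by
        ext x
        simp only [Set.mem_setOf_eq, Set.mem_empty_iff_false, iff_false, not_and]
        intro hx hgv
        rw [hg_out x v hev] at hgv
        exact lt_irrefl 0 hgv
      rw [hempty]
      simp [EMetric.diam]
  · -- Lebesgue
    intro x hx
    rw [Set.mem_iUnion] at hx
    obtain ⟨j, hxj⟩ := hx
    obtain ⟨v, hv⟩ := hG5 j x hxj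
    refine ⟨e j v, fun y hy hd => ?_⟩
    have hd_r : dist x y < r := lt_of_lt_of_le hd (min_le_right _ _)
    have hd_L : dist x y < L := lt_of_lt_of_le hd (min_le_left _ _)
    have hbjy : 0 < b j y := by
      refine hb_pos_of j y ⟨x, hxj⟩ ?_
      have hinf : Metric.infDist y (A j) ≤ dist y x := Metric.infDist_le_dist_of_mem hxj
      rw [dist_comm y x] at hinf
      linarith
    have hyj : y ∈ Nbhd (A j) δ' := hb_pos j y hbjy
    rw [hg_apply, hc_eq]
    have hSy : 0 < Sf y := lt_of_lt_of_le hσ (hS_ge y hy)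
    exact mul_pos (div_pos hbjy hSy) (hv y hyj hd_L)
end
namespace St16

noncomputable def del (ε : ℝ) (nn : ℕ → ℕ) : ℕ → ℝ
  | 0 => 0
  | (i+1) => if i = 0 then 0 else
      del ε nn i + (del ε nn i + ((2:ℝ)^(i+2) * (nn i : ℝ)) / ε + 1/ε + 1)

noncomputable def rr (ε : ℝ) (nn : ℕ → ℕ) (i : ℕ) : ℝ :=
  del ε nn i + ((2:ℝ)^(i+2) * (nn i : ℝ)) / ε + 1/ε + 1

lemma del_one (ε : ℝ) (nn : ℕ → ℕ) : del ε nn 1 = 0 := by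
  show del ε nn (0+1) = 0
  rw [del, if_pos rfl]

lemma del_succ (ε : ℝ) (nn : ℕ → ℕ) {i : ℕ} (hi : 1 ≤ i) :
    del ε nn (i+1) = del ε nn i + rr ε nn i := by
  cases i with
  | zero => omega
  | succ n =>
    rw [del, if_neg (Nat.succ_ne_zero n), rr]

lemma del_nonneg {ε : ℝ} (hε : 0 < ε) (nn : ℕ → ℕ) : ∀ i, 0 ≤ del ε nn i := by
  intro i
  induction i with
  | zero => simp [del]
  | succ n ih =>
    rw [del]
    split
    · exact le_refl 0
    · have h1 : 0 ≤ ((2:ℝ)^(n+2) * (nn n : ℝ)) / ε := by positivity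
      have h2 : 0 ≤ 1/ε := by positivity
      linarith

lemma rr_lb {ε : ℝ} (hε : 0 < ε) (nn : ℕ → ℕ) (i : ℕ) :
    del ε nn i + ((2:ℝ)^(i+2) * (nn i : ℝ)) / ε + 1/ε ≤ rr ε nn i := by
  rw [rr]; linarith

lemma rr_ge_inv {ε : ℝ} (hε : 0 < ε) (nn : ℕ → ℕ) (i : ℕ) : 1/ε ≤ rr ε nn i := by
  have h1 := del_nonneg hε nn i
  have h2 : 0 ≤ ((2:ℝ)^(i+2) * (nn i : ℝ)) / ε := by positivity
  rw [rr]; linarith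

lemma del_lt_rr {ε : ℝ} (hε : 0 < ε) (nn : ℕ → ℕ) (i : ℕ) : del ε nn i < rr ε nn i := by
  have h2 : 0 ≤ ((2:ℝ)^(i+2) * (nn i : ℝ)) / ε := by positivity
  have h3 : 0 < 1/ε := by positivity
  rw [rr]; linarith

lemma rr_le_del_succ {ε : ℝ} (hε : 0 < ε) (nn : ℕ → ℕ) {i : ℕ} (hi : 1 ≤ i) :
    rr ε nn i ≤ del ε nn (i+1) := by
  rw [del_succ ε nn hi]
  have := del_nonneg hε nn i
  linarith

/-- the key numeric estimate for the gluing step -/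
lemma lam_step {ε : ℝ} (hε : 0 < ε) (nn : ℕ → ℕ) (hnn : ∀ i, 1 ≤ nn i) (i : ℕ) :
    (ε/2 + ε/2^(i+1)) + 2 * (nn i : ℝ) / (rr ε nn i - del ε nn i) ≤ ε/2 + ε/2^i := by
  have hn1 : (1:ℝ) ≤ (nn i : ℝ) := by exact_mod_cast hnn i
  have hnpos : (0:ℝ) < (nn i : ℝ) := by linarith
  have hcpos : (0:ℝ) < ((2:ℝ)^(i+2) * (nn i : ℝ)) / ε := by positivity
  have hrd : rr ε nn i - del ε nn i = ((2:ℝ)^(i+2) * (nn i : ℝ)) / ε + 1/ε + 1 := by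
    rw [rr]; ring
  have h1e : 0 < 1/ε := by positivity
  have hle : ((2:ℝ)^(i+2) * (nn i : ℝ)) / ε ≤ rr ε nn i - del ε nn i := by
    rw [hrd]; linarith
  have hkey : 2 * (nn i : ℝ) / (rr ε nn i - del ε nn i)
      ≤ 2 * (nn i : ℝ) / (((2:ℝ)^(i+2) * (nn i : ℝ)) / ε) :=
    div_le_div_of_nonneg_left (by linarith) hcpos hle
  have hval : 2 * (nn i : ℝ) / (((2:ℝ)^(i+2) * (nn i : ℝ)) / ε) = ε/2^(i+1) := by
    rw [pow_succ, pow_succ]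
    field_simp
  have hhalf : ε/2^(i+1) + ε/2^(i+1) = ε/2^i := by
    rw [pow_succ]
    field_simp
    ring
  rw [hval] at hkey
  linarith

end St16

theorem stmt16 {X : Type u} [MetricSpace X] (hcad : CountableAsdim X) :
    ∀ ε > (0:ℝ), ∀ S : Type u, Cardinal.mk (X × ℕ) < Cardinal.mk S →
      ∃ g : X → S → ℝ, PartUnityOn g Set.univ ∧ LipschitzEpsOn ε g Set.univ ∧
        (∃ K : ℝ, 0 < K ∧ CoboundedOn K g Set.univ) ∧
        ∀ x : X, ∃ v : S, Metric.ball x (1 / ε) ⊆ {y : X | 0 < g y v} := by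
  intro ε hε S hS
  obtain ⟨nn, hnn, hmain⟩ := hcad
  have hnn' : ∀ i, (1:ℝ) ≤ (nn i : ℝ) := fun i => by exact_mod_cast hnn i
  set R : ℕ → ℝ := fun i => 2 * St16.del ε nn (i+1) + 5/ε + 1 with hR
  have h5e : 0 < 5/ε := by positivity
  have h1e : 0 < 1/ε := by positivity
  have hRpos : ∀ i, 0 < R i := by
    intro i
    have := St16.del_nonneg hε nn (i+1)
    rw [hR]; dsimp only; linarith
  obtain ⟨𝒱, h𝒱1, hdec, m, hm, hub⟩ := hmain R hRpos
  obtain ⟨M, hM0, hMbd⟩ := hub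
  set lam : ℕ → ℝ := fun i => ε/2 + ε/2^i with hlam
  have hlam_nonneg : ∀ i, 0 ≤ lam i := by
    intro i; rw [hlam]; positivity
  have hlam_half : ∀ i, ε/2 ≤ lam i := by
    intro i; rw [hlam]; dsimp only
    have : 0 < ε/2^i := by positivity
    linarith
  set K : ℝ := M + 2 * St16.del ε nn m with hK
  have hKpos : 0 < K := by
    have := St16.del_nonneg hε nn m
    rw [hK]; linarith
  -- the downward induction
  have key : ∀ jj i, 1 ≤ i → i + jj = m → ∀ U ∈ 𝒱 i,
      Good (St16.del ε nn i) (lam i) (1/ε) K U := by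
    intro jj
    induction jj with
    | zero =>
      intro i hi him U hU
      have hieq : i = m := by omega
      subst hieq
      have := good_base (A := U) (M := M) (δ := St16.del ε nn i) (lam := lam i) (L := 1/ε)
        (St16.del_nonneg hε nn i) (hlam_nonneg i) hM0.le (hMbd U hU)
      rw [← hK] at this
      exact this
    | succ jj ih =>
      intro i hi him U hU
      have him1 : (i+1) + jj = m := by omega
      have hi1 : 1 ≤ i + 1 := by omega
      obtain ⟨𝒲, h𝒲, hU_eq⟩ := hdec i hi U hU
      have hdel1 := St16.del_nonneg hε nn (i+1)
      have hRdel : R i - 2 * St16.del ε nn (i+1) = 5/ε + 1 := by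
        rw [hR]; dsimp only; ring
      have hgood : ∀ j : Fin (nn i),
          Good (St16.del ε nn (i+1)) (lam (i+1)) (1/ε) K (⋃₀ 𝒲 j) := by
        intro j
        have hDJ := good_sUnion (𝒲 j) (R i) (St16.del ε nn (i+1)) (lam (i+1)) (1/ε) K
          hdel1 (by rw [hR]; dsimp only; linarith) (hlam_nonneg (i+1))
          ((h𝒲 j).2)
          (fun W hW => ih (i+1) hi1 him1 W ((h𝒲 j).1 hW))
        rw [hRdel] at hDJ
        have hmaxeq : max (lam (i+1)) (2/(5/ε + 1)) = lam (i+1) := by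
          refine max_eq_left ?_
          have ha : 2/(5/ε + 1) ≤ 2/(5/ε) := by
            refine div_le_div_of_nonneg_left (by norm_num) h5e (by linarith)
          have hb : 2/(5/ε) = 2*ε/5 := by
            field_simp
          have hc : 2*ε/5 ≤ ε/2 := by linarith
          refine le_trans ha (le_trans (le_of_eq hb) (le_trans hc (hlam_half (i+1))))
        have hmineq : min (1/ε) (5/ε + 1) = 1/ε := by
          have h4e : (0:ℝ) ≤ 4/ε := by positivity
          have h15 : (5:ℝ)/ε = 1/ε + 4/ε := by ring
          refine min_eq_left (by linarith)
        rw [hmaxeq, hmineq] at hDJ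
        exact hDJ
      have hcol := good_glue (Nat.lt_of_lt_of_le Nat.zero_lt_one (hnn i))
        (fun j : Fin (nn i) => ⋃₀ 𝒲 j)
        (St16.del ε nn i) (St16.del ε nn (i+1)) (St16.rr ε nn i) (lam (i+1)) (1/ε) K
        (St16.del_nonneg hε nn i) (St16.del_lt_rr hε nn i) (St16.rr_le_del_succ hε nn hi)
        (hlam_nonneg (i+1)) hgood
      rw [← hU_eq] at hcol
      rw [min_eq_left (St16.rr_ge_inv hε nn i)] at hcol
      refine good_mono hcol ?_ le_rfl le_rfl
      exact St16.lam_step hε nn hnn i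
  -- conclude at level 1
  have hUuniv : Set.univ ∈ 𝒱 1 := by rw [h𝒱1]; rfl
  have h1 := key (m-1) 1 le_rfl (by omega) Set.univ hUuniv
  rw [St16.del_one] at h1
  have hlam1 : lam 1 = ε := by rw [hlam]; norm_num
  rw [hlam1] at h1
  obtain ⟨g, hg1, hg2, hg3, hg4, hg5⟩ := h1
  have hxm : ∀ z : X, z ∈ Nbhd (Set.univ : Set X) 0 :=
    fun z => ⟨z, trivial, by simp⟩
  obtain ⟨ι⟩ : Nonempty ((X × ℕ) ↪ S) := (Cardinal.le_def _ _).1 hS.le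
  refine ⟨fun x => ⇑((g x).embDomain ι), ?_, ?_, ⟨K, hKpos, ?_⟩, ?_⟩
  · -- partition of unity
    intro a _
    show IsDelta ⇑((g a).embDomain ι)
    refine ⟨?_, ?_, ?_⟩
    · intro s
      by_cases hs : s ∈ Set.range ι
      · obtain ⟨v, rfl⟩ := hs
        rw [Finsupp.embDomain_apply_self]
        exact (hg1 a (hxm a)).1 v
      · rw [Finsupp.embDomain_notin_range _ _ _ hs]
    · rw [Finsupp.fun_support_eq]
      exact Finset.finite_toSet _
    · rw [St16.finsum_eq_tot, St16.tot_embDomain]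
      exact (hg1 a (hxm a)).2
  · -- Lipschitz
    intro x _ y _
    show l1dist ⇑((g x).embDomain ι) ⇑((g y).embDomain ι) ≤ ε * dist x y + ε
    rw [St16.l1dist_eq_l1f, St16.l1f_embDomain]
    exact hg3 x (hxm x) y (hxm y)
  · -- cobounded
    intro s
    by_cases hs : s ∈ Set.range ι
    · obtain ⟨v, rfl⟩ := hs
      refine le_trans (le_of_eq (congrArg EMetric.diam ?_)) (hg4 v)
      ext x
      simp only [Set.mem_setOf_eq, Finsupp.embDomain_apply_self]
      exact ⟨fun h => ⟨hxm x, h.2⟩, fun h => ⟨trivial, h.2⟩⟩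
    · have hdiam : EMetric.diam (∅ : Set X) ≤ ENNReal.ofReal K := by simp [EMetric.diam]
      refine le_trans (le_of_eq (congrArg EMetric.diam ?_)) hdiam
      ext x
      simp only [Set.mem_setOf_eq, Set.mem_empty_iff_false, iff_false, not_and]
      intro _
      rw [Finsupp.embDomain_notin_range _ _ _ hs]
      exact lt_irrefl 0
  · -- Lebesgue
    intro x
    obtain ⟨v, hv⟩ := hg5 x trivial
    refine ⟨ι v, fun y hy => ?_⟩
    rw [Metric.mem_ball] at hy
    have hpos : 0 < g y v := hv y (hxm y) (by rw [dist_comm]; exact hy)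
    show 0 < ((g y).embDomain ι) (ι v)
    rw [Finsupp.embDomain_apply_self]
    exact hpos
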